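/- Let N(n, s, m, T) count sequences in Σ₄^n with ℓ-RLL constraint, last run s = {a}^t, GC-content exactly m, and synthesis time at most T. Then for n > t and T ≥ 4(t-1) + a: N(n, {a}^t, m, T) = Σ over runs s' = {a'}^{t'} with a' ≠ a, 1 ≤ t' ≤ ℓ, of N(n - t, s', m - G(s), T - 4(t-1) - ((a - a') mod 4)), where G({a}^t) = t if a ∈ {3,4} and 0 otherwise, and the shifted modulo takes values in {1,2,3,4}. -/

import Mathlib

open scoped Classical

/-- Shifted modulo: maps any integer to {1,2,3,4}, with `smod x ≡ x [ZMOD 4]`. -/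
def smod (x : ℤ) : ℤ := (x - 1) % 4 + 1

/-- Auxiliary synthesis-time sum over the differential sequence. -/
def synthAux : ℤ → List ℤ → ℤ
  | _, [] => 0
  | prev, b :: rest => smod (b - prev) + synthAux b rest

/-- Synthesis time `T(c) = Σ dᵢ(c)` with `d₁ = c₁`, `dᵢ = (cᵢ - c_{i-1}) mod 4` (shifted). -/
def synth : List ℤ → ℤ
  | [] => 0
  | a :: rest => a + synthAux a rest

/-- Membership in the alphabet Σ₄ = {1,2,3,4}. -/
def inSigma4 (c : List ℤ) : Prop := ∀ x ∈ c, 1 ≤ x ∧ x ≤ 4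

/-- ℓ-runlength-limited: no ℓ+1 consecutive equal symbols. -/
def RLL (ℓ : ℕ) (c : List ℤ) : Prop :=
  ∀ a ∈ c, ¬ (List.replicate (ℓ + 1) a <:+: c)

/-- The last (maximal constant) run of `c` is `{a}^t`. -/
def lastRunIs (c : List ℤ) (a : ℤ) (t : ℕ) : Prop :=
  List.replicate t a <:+ c ∧ ¬ (List.replicate (t + 1) a <:+ c)

/-- The finite set of all length-`n` sequences over Σ₄ = {1,2,3,4}. -/
def seqs (n : ℕ) : Finset (List ℤ) :=
  (Finset.univ : Finset (Fin n → Fin 4)).image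
    (fun f => (List.ofFn f).map (fun x : Fin 4 => ((x : ℕ) : ℤ) + 1))

/-- GC-content: number of symbols greater than 2 (i.e. C or G). -/
def gc (c : List ℤ) : ℕ := (c.filter (fun x => 2 < x)).length

/-- Length-`n` ℓ-RLL sequences with last run `{a}^t`, GC-content `m`, synthesis time ≤ `T`. -/
noncomputable def CsetG (n ℓ : ℕ) (a : ℤ) (t : ℕ) (m T : ℤ) : Finset (List ℤ) :=
  (seqs n).filter (fun c => RLL ℓ c ∧ lastRunIs c a t ∧ (gc c : ℤ) = m ∧ synth c ≤ T)

noncomputable def NcountG (n ℓ : ℕ) (a : ℤ) (t : ℕ) (m T : ℤ) : ℕ := (CsetG n ℓ a t m T).card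

lemma smod_zero' : smod 0 = 4 := by decide

lemma synthAux_append (prev : ℤ) (l r : List ℤ) :
    synthAux prev (l ++ r) = synthAux prev l + synthAux ((prev :: l).getLast (by simp)) r := by
  induction l generalizing prev with
  | nil => simp [synthAux]
  | cons b l ih =>
    simp only [List.cons_append, synthAux]
    rw [List.getLast_cons (by simp : b :: l ≠ [])]
    rw [ih b]
    ring

lemma synthAux_const (a : ℤ) (k : ℕ) : synthAux a (List.replicate k a) = 4 * k := by
  induction k with
  | zero => simp [synthAux]
  | succ k ih => simp [List.replicate_succ, synthAux, ih, smod_zero']; ring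

lemma synthAux_replicate (b a : ℤ) (k : ℕ) :
    synthAux b (List.replicate (k + 1) a) = smod (a - b) + 4 * k := by
  simp [List.replicate_succ, synthAux, synthAux_const]

lemma synth_append (c r : List ℤ) (h : c ≠ []) :
    synth (c ++ r) = synth c + synthAux (c.getLast h) r := by
  cases c with
  | nil => simp at h
  | cons x c =>
    simp only [List.cons_append, synth, synthAux_append]
    ring

lemma gc_append (l r : List ℤ) : gc (l ++ r) = gc l + gc r := by
  simp [gc]

lemma gc_replicate (t : ℕ) (a : ℤ) : gc (List.replicate t a) = if 2 < a then t else 0 := by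
  simp [gc, List.filter_replicate]
  split <;> simp_all

variable {α : Type*}

lemma repl_suffix_repl {a : α} {k t : ℕ} (h : k ≤ t) :
    List.replicate k a <:+ List.replicate t a := by
  refine ⟨List.replicate (t - k) a, ?_⟩
  rw [← List.replicate_add]
  congr 1
  omega

lemma suffix_getLast {l m : List α} (h : l ≠ []) (hs : l <:+ m) :
    m.getLast (by rintro rfl; simp at hs; exact h hs) = l.getLast h := by
  obtain ⟨u, rfl⟩ := hs
  rw [List.getLast_append (by simp [h])]
  simp [h, List.isEmpty_iff]

lemma repl_prefix_decomp {a : α} {k : ℕ} {u v : List α}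
    (h : List.replicate k a <+: u ++ v) :
    List.replicate k a <+: u ∨
      (u.length ≤ k ∧ u = List.replicate u.length a ∧
        List.replicate (k - u.length) a <+: v) := by
  by_cases hk : k ≤ u.length
  · left
    rw [List.prefix_iff_eq_take] at h ⊢
    rw [h, List.length_replicate, List.take_append]
    have : k - u.length = 0 := by omega
    simp [this, List.length_replicate]
  · right
    refine ⟨by omega, ?_⟩
    have hsplit : List.replicate k a
        = List.replicate u.length a ++ List.replicate (k - u.length) a := by
      rw [← List.replicate_add]; congr 1; omega
    rw [hsplit] at h
    obtain ⟨w, hw⟩ := h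
    rw [List.append_assoc] at hw
    obtain ⟨hu, hv⟩ := List.append_inj hw (by simp)
    exact ⟨hu.symm, ⟨w, hv⟩⟩

lemma repl_infix_decomp {a : α} {k : ℕ} {u v : List α}
    (h : List.replicate k a <:+: u ++ v) :
    List.replicate k a <:+: u ∨ List.replicate k a <:+: v ∨
      ∃ i j, i + j = k ∧ List.replicate i a <:+ u ∧ List.replicate j a <+: v := by
  induction u with
  | nil => right; left; simpa using h
  | cons b u ih =>
    rw [List.cons_append, List.infix_cons_iff] at h
    rcases h with h | h
    · rw [← List.cons_append] at h
      rcases repl_prefix_decomp h with h | ⟨hlen, hu, hv⟩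
      · exact Or.inl h.isInfix
      · right; right
        exact ⟨(b :: u).length, k - (b :: u).length, by omega, by rw [← hu], hv⟩
    · rcases ih h with h | h | ⟨i, j, hij, hsu, hpv⟩
      · exact Or.inl (h.trans ((u.suffix_cons b).isInfix))
      · exact Or.inr (Or.inl h)
      · exact Or.inr (Or.inr ⟨i, j, hij, hsu.trans (List.suffix_cons _ _), hpv⟩)


lemma mem_seqs {c : List ℤ} {n : ℕ} : c ∈ seqs n ↔ c.length = n ∧ inSigma4 c := by
  constructor
  · intro h
    simp only [seqs, Finset.mem_image, Finset.mem_univ, true_and] at h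
    obtain ⟨f, rfl⟩ := h
    refine ⟨by simp, ?_⟩
    intro x hx
    simp only [List.mem_map, List.mem_ofFn] at hx
    obtain ⟨y, ⟨i, rfl⟩, rfl⟩ := hx
    have := (f i).isLt
    constructor <;> omega
  · rintro ⟨hlen, hsig⟩
    simp only [seqs, Finset.mem_image, Finset.mem_univ, true_and]
    refine ⟨fun i => ⟨(c.get ⟨(i : ℕ), by omega⟩ - 1).toNat, ?_⟩, ?_⟩
    · have := hsig _ (c.get_mem ⟨(i : ℕ), by omega⟩)
      omega
    · apply List.ext_get (by simp [hlen])
      intro i h1 h2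
      simp only [List.get_eq_getElem, List.getElem_map, List.getElem_ofFn]
      have := hsig _ (List.getElem_mem h2)
      omega

lemma suffix_getLast_eq {c : List ℤ} {a : ℤ} {t : ℕ} (h : List.replicate t a <:+ c)
    (ht : 1 ≤ t) (hc : c ≠ []) : c.getLast hc = a := by
  have h1 : (List.replicate t a) ≠ [] := by simp; omega
  rw [suffix_getLast h1 h, List.getLast_replicate]

lemma lastRun_unique {c : List ℤ} {a a' : ℤ} {t t' : ℕ}
    (h : lastRunIs c a t) (h' : lastRunIs c a' t') (ht : 1 ≤ t) (ht' : 1 ≤ t') :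
    a = a' ∧ t = t' := by
  obtain ⟨u, hu⟩ := h.1
  have hc : c ≠ [] := by
    rw [← hu]; simp; omega
  have ha : c.getLast hc = a := suffix_getLast_eq h.1 ht hc
  have ha' : c.getLast hc = a' := suffix_getLast_eq h'.1 ht' hc
  have haa : a = a' := ha ▸ ha'
  subst haa
  refine ⟨rfl, ?_⟩
  by_contra hne
  rcases Nat.lt_or_ge t t' with hlt | hge
  · exact h.2 ((repl_suffix_repl (by omega : t + 1 ≤ t')).trans h'.1)
  · exact h'.2 ((repl_suffix_repl (by omega : t' + 1 ≤ t)).trans h.1)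

lemma lastRun_decomp {c : List ℤ} {a : ℤ} {t : ℕ} (h : lastRunIs c a t)
    (hlen : t < c.length) :
    ∃ c', ∃ hc' : c' ≠ [], c = c' ++ List.replicate t a ∧ c'.getLast hc' ≠ a := by
  obtain ⟨c', hc⟩ := h.1
  have hc' : c' ≠ [] := by
    intro hnil
    rw [hnil, List.nil_append] at hc
    rw [← hc] at hlen
    simp at hlen
  refine ⟨c', hc', hc.symm, ?_⟩
  intro hlast
  apply h.2
  refine ⟨c'.dropLast, ?_⟩
  rw [List.replicate_succ, ← hc]
  rw [show c'.dropLast ++ a :: List.replicate t a = (c'.dropLast ++ [a]) ++ List.replicate t a by simp]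
  congr 1
  conv_rhs => rw [← List.dropLast_append_getLast hc']
  rw [hlast]

lemma exists_lastRun {c : List ℤ} (hc : c ≠ []) :
    ∃ t', 1 ≤ t' ∧ lastRunIs c (c.getLast hc) t' := by
  classical
  set a := c.getLast hc with ha
  set P : ℕ → Prop := fun k => List.replicate k a <:+ c with hP
  have hb : ∀ k, P k → k ≤ c.length := by
    intro k hk
    simpa using hk.length_le
  have h1 : P 1 := by
    simp only [hP, List.replicate_one]
    refine ⟨c.dropLast, ?_⟩
    exact List.dropLast_append_getLast hc
  set t' := Nat.findGreatest P c.length with ht'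
  have hle : 1 ≤ t' := Nat.le_findGreatest (by
    have := hb 1 h1; omega) h1
  refine ⟨t', hle, ?_, ?_⟩
  · exact Nat.findGreatest_spec (P := P) (by have := hb 1 h1; omega : 1 ≤ c.length) h1
  · intro hsuf
    have : t' + 1 ≤ t' := Nat.le_findGreatest (hb _ hsuf) hsuf
    omega

lemma RLL_of_infix {ℓ : ℕ} {c c' : List ℤ} (h : RLL ℓ c) (hinf : c' <:+: c) :
    RLL ℓ c' := by
  intro x hx hrep
  exact h x (hinf.subset hx) (hrep.trans hinf)

lemma RLL_append {ℓ t : ℕ} {c' : List ℤ} {a : ℤ} (hc' : c' ≠ []) (hR : RLL ℓ c')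
    (hlast : c'.getLast hc' ≠ a) (ht : t ≤ ℓ) :
    RLL ℓ (c' ++ List.replicate t a) := by
  intro x _ hinf
  have hxmem : x ∈ List.replicate (ℓ + 1) x := by simp
  rcases repl_infix_decomp hinf with h | h | ⟨i, j, hij, hsu, hpv⟩
  · exact hR x (h.subset hxmem) h
  · have := h.sublist.length_le
    simp at this
    omega
  · have hjt : j ≤ t := by simpa using hpv.length_le
    rcases Nat.eq_zero_or_pos j with hj | hj
    · have hi : i = ℓ + 1 := by omega
      subst hi
      exact hR x (hsu.subset hxmem) hsu.isInfix
    · have hxa : x = a := by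
        obtain ⟨w, hw⟩ := hpv
        obtain ⟨j0, rfl⟩ : ∃ j0, j = j0 + 1 := ⟨j - 1, by omega⟩
        obtain ⟨t0, rfl⟩ : ∃ t0, t = t0 + 1 := ⟨t - 1, by omega⟩
        simp [List.replicate_succ] at hw
        exact hw.1
      rcases Nat.eq_zero_or_pos i with hi | hi
      · omega
      · exact hlast (by rw [suffix_getLast_eq hsu hi hc', hxa])

lemma Cset_eq {n ℓ t : ℕ} {a : ℤ} {m T : ℤ}
    (ht : 1 ≤ t) (htℓ : t ≤ ℓ) (ha : 1 ≤ a ∧ a ≤ 4) (hn : t < n) :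
    CsetG n ℓ a t m T =
      (({1, 2, 3, 4} : Finset ℤ).erase a).biUnion (fun a' =>
        (Finset.Icc 1 ℓ).biUnion (fun t' =>
          (CsetG (n - t) ℓ a' t' (m - (if 2 < a then (t : ℤ) else 0))
              (T - 4 * ((t : ℤ) - 1) - smod (a - a'))).image (· ++ List.replicate t a))) := by
  obtain ⟨t0, rfl⟩ : ∃ t0, t = t0 + 1 := ⟨t - 1, by omega⟩
  ext c
  simp only [Finset.mem_biUnion, Finset.mem_image, CsetG, Finset.mem_filter, mem_seqs,
    Finset.mem_erase, Finset.mem_Icc]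
  constructor
  · rintro ⟨⟨hclen, hsig⟩, hRLL, hlast, hgc, hsynth⟩
    obtain ⟨c', hc'ne, rfl, hlastne⟩ := lastRun_decomp hlast (by
      rw [hclen]; omega)
    have hc'len : c'.length = n - (t0 + 1) := by
      simp only [List.length_append, List.length_replicate] at hclen
      omega
    obtain ⟨t', ht'1, hrun⟩ := exists_lastRun hc'ne
    set a' := c'.getLast hc'ne with ha'
    have hc'inf : c' <:+: c' ++ List.replicate (t0 + 1) a := ⟨[], List.replicate (t0 + 1) a, by simp⟩
    have hR' : RLL ℓ c' := RLL_of_infix hRLL hc'inf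
    have ha'mem : a' ∈ c' := List.getLast_mem hc'ne
    have ha'sig := hsig a' (by simp [ha'mem])
    have ht'ℓ : t' ≤ ℓ := by
      by_contra hgt
      push_neg at hgt
      exact hR' a' ha'mem ((repl_suffix_repl (by omega)).trans hrun.1).isInfix
    have hsynth' : synth (c' ++ List.replicate (t0 + 1) a)
        = synth c' + smod (a - a') + 4 * t0 := by
      rw [synth_append _ _ hc'ne, synthAux_replicate]
      ring
    have hgc' : gc (c' ++ List.replicate (t0 + 1) a)
        = gc c' + (if 2 < a then t0 + 1 else 0) := by
      rw [gc_append, gc_replicate]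
    refine ⟨a', ⟨hlastne, by simp; omega⟩, t', ⟨ht'1, ht'ℓ⟩, c',
      ⟨⟨⟨hc'len, fun x hx => hsig x (by simp [hx])⟩, hR', hrun, ?_, ?_⟩, rfl⟩⟩
    · rw [hgc'] at hgc
      split_ifs at hgc ⊢ <;> push_cast at hgc ⊢ <;> omega
    · rw [hsynth'] at hsynth
      push_cast
      linarith
  · rintro ⟨a', ⟨ha'ne, ha'mem⟩, t', ⟨ht'1, ht'ℓ⟩, c',
      ⟨⟨⟨hlen', hsig'⟩, hR', hrun', hgc', hsyn'⟩, rfl⟩⟩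
    have ha'bd : 1 ≤ a' ∧ a' ≤ 4 := by
      simp at ha'mem
      rcases ha'mem with rfl | rfl | rfl | rfl <;> norm_num
    have hc'ne : c' ≠ [] := by
      intro hnil
      rw [hnil] at hlen'
      simp at hlen'
      omega
    have hlast' : c'.getLast hc'ne = a' := suffix_getLast_eq hrun'.1 ht'1 hc'ne
    have hsynth' : synth (c' ++ List.replicate (t0 + 1) a)
        = synth c' + smod (a - a') + 4 * t0 := by
      rw [synth_append _ _ hc'ne, synthAux_replicate, hlast']
      ring
    refine ⟨⟨?_, ?_⟩, ?_, ⟨⟨c', rfl⟩, ?_⟩, ?_, ?_⟩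
    · simp only [List.length_append, List.length_replicate, hlen']
      omega
    · intro x hx
      rcases List.mem_append.1 hx with h | h
      · exact hsig' x h
      · rw [List.eq_of_mem_replicate h]
        exact ha
    · exact RLL_append hc'ne hR' (by rw [hlast']; exact ha'ne) htℓ
    · rintro ⟨u, hu⟩
      rw [List.replicate_succ, show u ++ a :: List.replicate (t0 + 1) a
        = (u ++ [a]) ++ List.replicate (t0 + 1) a by simp] at hu
      have h2 := List.append_cancel_right hu
      apply ha'ne
      rw [← hlast']
      subst h2
      simp
    · rw [gc_append, gc_replicate]
      split_ifs at hgc' ⊢ <;> push_cast at hgc' ⊢ <;> omega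
    · rw [hsynth']
      push_cast at hsyn' ⊢
      linarith

lemma img_det {n ℓ t t' : ℕ} {a a' : ℤ} {m' T' : ℤ} {c : List ℤ}
    (h : c ∈ (CsetG (n - t) ℓ a' t' m' T').image (· ++ List.replicate t a)) :
    ∃ c', c = c' ++ List.replicate t a ∧ c'.length = n - t ∧ lastRunIs c' a' t' := by
  simp only [Finset.mem_image, CsetG, Finset.mem_filter, mem_seqs] at h
  obtain ⟨c', ⟨⟨⟨hlen, _⟩, _, hrun, _, _⟩, rfl⟩⟩ := h
  exact ⟨c', rfl, hlen, hrun⟩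

theorem stmt7 (n ℓ t : ℕ) (a : ℤ) (m T : ℤ)
    (hℓ : 1 ≤ ℓ) (ht : 1 ≤ t) (htℓ : t ≤ ℓ) (ha : 1 ≤ a ∧ a ≤ 4)
    (hn : t < n) (hT : 4 * ((t : ℤ) - 1) + a ≤ T) :
    NcountG n ℓ a t m T =
      ∑ a' ∈ ({1, 2, 3, 4} : Finset ℤ).erase a, ∑ t' ∈ Finset.Icc 1 ℓ,
        NcountG (n - t) ℓ a' t' (m - (if 2 < a then (t : ℤ) else 0))
          (T - 4 * ((t : ℤ) - 1) - smod (a - a')) := by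
  unfold NcountG
  rw [Cset_eq ht htℓ ha hn]
  rw [Finset.card_biUnion]
  · refine Finset.sum_congr rfl fun a' ha' => ?_
    rw [Finset.card_biUnion]
    · refine Finset.sum_congr rfl fun t' ht' => ?_
      exact Finset.card_image_of_injective _ (fun x y h => List.append_cancel_right h)
    · intro t₁ h₁ t₂ h₂ hne
      simp only [Function.onFun]
      rw [Finset.disjoint_left]
      intro c hc1 hc2
      obtain ⟨c₁, rfl, hl₁, hr₁⟩ := img_det hc1
      obtain ⟨c₂, he₂, hl₂, hr₂⟩ := img_det hc2
      have hcc : c₂ = c₁ := List.append_cancel_right he₂.symm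
      subst hcc
      exact hne (lastRun_unique hr₁ hr₂ (Finset.mem_Icc.1 h₁).1 (Finset.mem_Icc.1 h₂).1).2
  · intro a₁ h₁ a₂ h₂ hne
    simp only [Function.onFun]
    rw [Finset.disjoint_left]
    intro c hc1 hc2
    simp only [Finset.mem_biUnion] at hc1 hc2
    obtain ⟨t₁, ht₁, hc1⟩ := hc1
    obtain ⟨t₂, ht₂, hc2⟩ := hc2
    obtain ⟨c₁, rfl, hl₁, hr₁⟩ := img_det hc1
    obtain ⟨c₂, he₂, hl₂, hr₂⟩ := img_det hc2
    have hcc : c₂ = c₁ := List.append_cancel_right he₂.symm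
    subst hcc
    exact hne (lastRun_unique hr₁ hr₂ (Finset.mem_Icc.1 ht₁).1 (Finset.mem_Icc.1 ht₂).1).1
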